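/- arXiv:0908.0699 — 4 statements merged into one kernel-verified Lean document; each statement's English description precedes it below -/
import Mathlib

section
/- Fix a real number q > 1. Let I be a finite index set and, for each β ∈ I, let a_β, b_β, c_β be real numbers with b_β ≠ 0 and c_β > 0. Define F(s) = ∏_{β ∈ I} (1 − q^{−(a_β + b_β·s)}) / (1 − q^{−c_β + a_β + b_β·s}) for complex s where the denominators are nonzero, and for real s₀ set z_n(s₀) = #{β ∈ I : a_β + b_β·s₀ = 0} and z_p(s₀) = #{β ∈ I : a_β + b_β·s₀ = c_β}. Then: (i) F extends to a holomorphic function on a neighborhood of s₀ if and only if z_n(s₀) ≥ z_p(s₀); and (ii) the meromorphic order of F at s₀ is ≤ 0 (i.e. the meromorphic continuation of F does not vanish at s₀) if and only if z_n(s₀) ≤ z_p(s₀). -/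
open Complex Filter Topology

private lemma aux_an (u w : ℂ) (x : ℂ) :
    AnalyticAt ℂ (fun s : ℂ => 1 - Complex.exp (u + w * s)) x :=
  analyticAt_const.sub ((analyticAt_const.add (analyticAt_const.mul analyticAt_id)).cexp)

private lemma aux_factor (u w x : ℂ) (hw : w ≠ 0) (h1 : Complex.exp (u + w * x) = 1) :
    ∃ g : ℂ → ℂ, AnalyticAt ℂ g x ∧ g x ≠ 0 ∧
      ∀ z, 1 - Complex.exp (u + w * z) = (z - x) * g z := by
  set f : ℂ → ℂ := fun s => 1 - Complex.exp (u + w * s) with hf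
  have hfa : AnalyticAt ℂ f x := aux_an u w x
  have hfx : f x = 0 := by simp [hf, h1]
  have h0 : HasDerivAt (fun s : ℂ => u + w * s) w x := by
    simpa using ((hasDerivAt_id x).const_mul w).const_add u
  have hder : HasDerivAt f (-w) x := by
    have h2 := h0.cexp
    have h3 := h2.const_sub (1 : ℂ)
    simpa [h1] using h3
  obtain ⟨p, hp⟩ := hfa
  refine ⟨dslope f x, hp.has_fpower_series_dslope_fslope.analyticAt, ?_, fun z => ?_⟩
  · rw [dslope_same, hder.deriv]
    simpa using hw
  · have := sub_smul_dslope f x z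
    rw [hfx, sub_zero, smul_eq_mul] at this
    exact this.symm

private lemma aux_prod {ι : Type*} [Fintype ι] (u w : ι → ℂ) (hw : ∀ β, w β ≠ 0) (x : ℂ) :
    ∃ G : ℂ → ℂ, AnalyticAt ℂ G x ∧ G x ≠ 0 ∧
      ∀ z, (∏ β, (1 - Complex.exp (u β + w β * z))) =
        (z - x) ^ (Finset.univ.filter
          (fun β => Complex.exp (u β + w β * x) = 1)).card * G z := by
  classical
  set P : ι → Prop := fun β => Complex.exp (u β + w β * x) = 1 with hP
  have key := fun (β : ι) (h : P β) => aux_factor (u β) (w β) x (hw β) h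
  choose g hg1 hg2 hg3 using key
  set g' : ι → ℂ → ℂ := fun β => if h : P β then g β h else fun _ => 1 with hg'
  refine ⟨fun z => (∏ β ∈ Finset.univ.filter P, g' β z) *
      ∏ β ∈ Finset.univ.filter (fun β => ¬ P β), (1 - Complex.exp (u β + w β * z)),
    ?_, ?_, ?_⟩
  · exact ((Finset.univ.filter P).analyticAt_fun_prod
        (fun β hβ => by
          simp only [hg', dif_pos (Finset.mem_filter.mp hβ).2]
          exact hg1 β (Finset.mem_filter.mp hβ).2)).mul
      ((Finset.univ.filter fun β => ¬ P β).analyticAt_fun_prod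
        (fun β _ => aux_an (u β) (w β) x))
  · refine mul_ne_zero (Finset.prod_ne_zero_iff.mpr fun β hβ => ?_)
      (Finset.prod_ne_zero_iff.mpr fun β hβ => ?_)
    · simp only [hg', dif_pos (Finset.mem_filter.mp hβ).2]
      exact hg2 β (Finset.mem_filter.mp hβ).2
    · have := (Finset.mem_filter.mp hβ).2
      rw [hP] at this
      intro hz
      exact this (by linear_combination -hz)
  · intro z
    rw [← Finset.prod_filter_mul_prod_filter_not Finset.univ P
      (fun β => 1 - Complex.exp (u β + w β * z))]
    have : ∀ β ∈ Finset.univ.filter P,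
        1 - Complex.exp (u β + w β * z) = (z - x) * g' β z := fun β hβ => by
      simp only [hg', dif_pos (Finset.mem_filter.mp hβ).2]
      exact hg3 β (Finset.mem_filter.mp hβ).2 z
    rw [Finset.prod_congr rfl this, Finset.prod_mul_distrib, Finset.prod_const]
    ring




/-- Fix `q > 1` and, for each `β` in a finite index set `ι`, reals
`a β, b β, c β` with `b β ≠ 0` and `c β > 0`. Let
`F(s) = ∏_β (1 − q^{−(a β + b β s)}) / ∏_β (1 − q^{−c β + a β + b β s})`
(where `q^z = exp(z log q)`), and for real `s₀` set
`z_n(s₀) = #{β : a β + b β s₀ = 0}` and `z_p(s₀) = #{β : a β + b β s₀ = c β}`. Then: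
(i) `F` extends to a holomorphic function on a neighborhood of `s₀` (agreeing with `F`
wherever the denominator is nonzero) iff `z_n(s₀) ≥ z_p(s₀)`; and
(ii) the meromorphic order of `F` at `s₀` is `≤ 0` iff `z_n(s₀) ≤ z_p(s₀)`. -/
theorem statement4 (q : ℝ) (hq : 1 < q) {ι : Type*} [Fintype ι]
    (a b c : ι → ℝ) (hb : ∀ β, b β ≠ 0) (hc : ∀ β, 0 < c β)
    (F : ℂ → ℂ)
    (hF : F = fun s : ℂ =>
      (∏ β, (1 - Complex.exp (-((a β : ℂ) + (b β : ℂ) * s) * (Real.log q : ℂ)))) /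
      (∏ β, (1 - Complex.exp ((-(c β : ℂ) + (a β : ℂ) + (b β : ℂ) * s) * (Real.log q : ℂ))))) :
    ∀ s₀ : ℝ, ∃ hm : MeromorphicAt F (s₀ : ℂ),
      ((∃ g : ℂ → ℂ, ∃ U : Set ℂ, IsOpen U ∧ (s₀ : ℂ) ∈ U ∧ DifferentiableOn ℂ g U ∧
          ∀ s ∈ U,
            (∏ β, (1 - Complex.exp ((-(c β : ℂ) + (a β : ℂ) + (b β : ℂ) * s) * (Real.log q : ℂ))))
              ≠ 0 → g s = F s)
        ↔ Set.ncard {β : ι | a β + b β * s₀ = c β} ≤ Set.ncard {β : ι | a β + b β * s₀ = 0}) ∧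
      (meromorphicOrderAt F (s₀ : ℂ) ≤ 0
        ↔ Set.ncard {β : ι | a β + b β * s₀ = 0} ≤ Set.ncard {β : ι | a β + b β * s₀ = c β}) := by
  classical
  intro s₀
  set L : ℂ := (Real.log q : ℂ) with hL
  have hLR : Real.log q ≠ 0 := ne_of_gt (Real.log_pos hq)
  set x : ℂ := (s₀ : ℂ) with hx
  set uN : ι → ℂ := fun β => -(a β : ℂ) * L with huN
  set wN : ι → ℂ := fun β => -(b β : ℂ) * L with hwN
  set uD : ι → ℂ := fun β => (-(c β : ℂ) + (a β : ℂ)) * L with huD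
  set wD : ι → ℂ := fun β => (b β : ℂ) * L with hwD
  have hwNne : ∀ β, wN β ≠ 0 := fun β =>
    mul_ne_zero (neg_ne_zero.mpr (Complex.ofReal_ne_zero.mpr (hb β)))
      (Complex.ofReal_ne_zero.mpr hLR)
  have hwDne : ∀ β, wD β ≠ 0 := fun β =>
    mul_ne_zero (Complex.ofReal_ne_zero.mpr (hb β)) (Complex.ofReal_ne_zero.mpr hLR)
  -- identify the exponential conditions with the real linear conditions
  have hPN : ∀ β, (Complex.exp (uN β + wN β * x) = 1) ↔ a β + b β * s₀ = 0 := by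
    intro β
    have h1 : uN β + wN β * x = ((-((a β + b β * s₀) * Real.log q) : ℝ) : ℂ) := by
      push_cast [huN, hwN, hx, hL]; ring
    rw [h1, ← Complex.ofReal_exp, Complex.ofReal_eq_one, Real.exp_eq_one_iff,
      neg_eq_zero, mul_eq_zero]
    simp [hLR]
  have hPD : ∀ β, (Complex.exp (uD β + wD β * x) = 1) ↔ a β + b β * s₀ = c β := by
    intro β
    have h1 : uD β + wD β * x = (((-(c β) + a β + b β * s₀) * Real.log q : ℝ) : ℂ) := by
      push_cast [huD, hwD, hx, hL]; ring
    rw [h1, ← Complex.ofReal_exp, Complex.ofReal_eq_one, Real.exp_eq_one_iff, mul_eq_zero]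
    constructor
    · rintro (h | h)
      · linarith
      · exact absurd h hLR
    · intro h; left; linarith
  obtain ⟨G, hGa, hGx, hGf⟩ := aux_prod uN wN hwNne x
  obtain ⟨H, hHa, hHx, hHf⟩ := aux_prod uD wD hwDne x
  set m : ℕ := (Finset.univ.filter (fun β => Complex.exp (uN β + wN β * x) = 1)).card with hmdef
  set p : ℕ := (Finset.univ.filter (fun β => Complex.exp (uD β + wD β * x) = 1)).card with hpdef
  have hncard_n : Set.ncard {β : ι | a β + b β * s₀ = 0} = m := by
    rw [Set.ncard_eq_toFinset_card', Set.toFinset_setOf, hmdef]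
    congr 1
    apply Finset.filter_congr
    intro β _
    simp [hPN β]
  have hncard_p : Set.ncard {β : ι | a β + b β * s₀ = c β} = p := by
    rw [Set.ncard_eq_toFinset_card', Set.toFinset_setOf, hpdef]
    congr 1
    apply Finset.filter_congr
    intro β _
    simp [hPD β]
  -- factorizations of the numerator and denominator, in the literal form of the statement
  have hN : ∀ z : ℂ, (∏ β, (1 - Complex.exp (-((a β : ℂ) + (b β : ℂ) * z) * L)))
      = (z - x) ^ m * G z := by
    intro z
    rw [← hGf z]
    apply Finset.prod_congr rfl
    intro β _
    rw [show -((a β : ℂ) + (b β : ℂ) * z) * L = uN β + wN β * z by rw [huN, hwN]; ring]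
  have hD : ∀ z : ℂ, (∏ β, (1 - Complex.exp ((-(c β : ℂ) + (a β : ℂ) + (b β : ℂ) * z) * L)))
      = (z - x) ^ p * H z := by
    intro z
    rw [← hHf z]
    apply Finset.prod_congr rfl
    intro β _
    rw [show (-(c β : ℂ) + (a β : ℂ) + (b β : ℂ) * z) * L = uD β + wD β * z by
      rw [huD, hwD]; ring]
  have hFz : ∀ z : ℂ, F z = ((z - x) ^ m * G z) / ((z - x) ^ p * H z) := by
    intro z
    rw [hF]
    simp only
    rw [hN z, hD z]
  have hFeq : F = fun z => ((z - x) ^ m * G z) / ((z - x) ^ p * H z) := funext hFz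
  have hm : MeromorphicAt F x := by
    rw [hFeq]
    exact ((((analyticAt_id.sub analyticAt_const).pow m).mul hGa).meromorphicAt).div
      ((((analyticAt_id.sub analyticAt_const).pow p).mul hHa).meromorphicAt)
  have horder : meromorphicOrderAt F x = (((m : ℤ) - (p : ℤ) : ℤ) : WithTop ℤ) := by
    rw [meromorphicOrderAt_eq_int_iff hm]
    refine ⟨fun z => G z / H z, hGa.div hHa hHx, div_ne_zero hGx hHx, ?_⟩
    filter_upwards [self_mem_nhdsWithin] with z hz
    have hzx : z - x ≠ 0 := sub_ne_zero.mpr hz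
    rw [hFz z, smul_eq_mul, zpow_sub₀ hzx, zpow_natCast, zpow_natCast, div_mul_div_comm]
  refine ⟨hm, ?_, ?_⟩
  · rw [hncard_n, hncard_p]
    constructor
    · -- extension exists → p ≤ m
      rintro ⟨g, U, hUo, hxU, hgd, hag⟩
      by_contra hlt
      push_neg at hlt
      have hgc : ContinuousAt g x := (hgd.differentiableAt (hUo.mem_nhds hxU)).continuousAt
      have hev : ∀ᶠ z in 𝓝[≠] x, G z / H z = (z - x) ^ (p - m) * g z := by
        have h1 : ∀ᶠ z in 𝓝 x, H z ≠ 0 := hHa.continuousAt.eventually_ne hHx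
        have h2 : ∀ᶠ z in 𝓝 x, z ∈ U := hUo.mem_nhds hxU
        filter_upwards [self_mem_nhdsWithin,
          eventually_nhdsWithin_of_eventually_nhds (h1.and h2)] with z hz hz2
        have hzx : z - x ≠ 0 := sub_ne_zero.mpr hz
        have hDz : (∏ β, (1 - Complex.exp ((-(c β : ℂ) + (a β : ℂ) + (b β : ℂ) * z) * L)))
            ≠ 0 := by
          rw [hD z]
          exact mul_ne_zero (pow_ne_zero _ hzx) hz2.1
        have hgz : g z = F z := hag z hz2.2 hDz
        rw [hgz, hFz z, mul_div_assoc',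
          show (z - x) ^ (p - m) * ((z - x) ^ m * G z) = (z - x) ^ p * G z by
            rw [← mul_assoc, ← pow_add, Nat.sub_add_cancel hlt.le],
          mul_div_mul_left _ _ (pow_ne_zero p hzx)]
      have hlim1 : Filter.Tendsto (fun z => (z - x) ^ (p - m) * g z) (𝓝[≠] x) (𝓝 0) := by
        have h0 : Filter.Tendsto (fun z => (z - x) ^ (p - m) * g z) (𝓝 x)
            (𝓝 ((x - x) ^ (p - m) * g x)) :=
          (((continuousAt_id.sub continuousAt_const).pow (p - m)).mul hgc)
        have hval : ((x - x) ^ (p - m) * g x : ℂ) = 0 := by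
          rw [sub_self, zero_pow (Nat.sub_ne_zero_of_lt hlt), zero_mul]
        rw [hval] at h0
        exact h0.mono_left nhdsWithin_le_nhds
      have hlim2 : Filter.Tendsto (fun z => G z / H z) (𝓝[≠] x) (𝓝 (G x / H x)) :=
        (hGa.continuousAt.div hHa.continuousAt hHx).tendsto.mono_left nhdsWithin_le_nhds
      have := tendsto_nhds_unique hlim2 (hlim1.congr' (hev.mono fun z h => h.symm))
      exact div_ne_zero hGx hHx this
    · -- p ≤ m → extension exists
      intro hpm
      set g : ℂ → ℂ := fun z => (z - x) ^ (m - p) * (G z / H z) with hg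
      have hga : AnalyticAt ℂ g x :=
        ((analyticAt_id.sub analyticAt_const).pow _).mul (hGa.div hHa hHx)
      obtain ⟨t, ht, hto, hxt⟩ := eventually_nhds_iff.mp hga.eventually_analyticAt
      refine ⟨g, t, hto, hxt, fun z hz => (ht z hz).differentiableAt.differentiableWithinAt,
        fun s _ hDs => ?_⟩
      rw [hD s] at hDs
      have h1 : ((s - x) ^ p : ℂ) ≠ 0 := fun h => hDs (by rw [h, zero_mul])
      have h2 : H s ≠ 0 := fun h => hDs (by rw [h, mul_zero])
      rw [hFz s, hg,
        show ((s - x) ^ m : ℂ) = (s - x) ^ (m - p) * (s - x) ^ p by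
          rw [← pow_add, Nat.sub_add_cancel hpm]]
      field_simp
  · rw [horder, hncard_n, hncard_p,
      show (0 : WithTop ℤ) = (((0 : ℤ) : WithTop ℤ)) from rfl, WithTop.coe_le_coe]
    omega
end

section
/- Let n ≥ 2 and let Σ = {e_k − e_l : 1 ≤ k, l ≤ n+1, k ≠ l} ⊂ ℝ^{n+1} be the root system of type A_n with simple roots α_k = e_k − e_{k+1} (1 ≤ k ≤ n). Let 1 ≤ i < j ≤ n, let S = {α_k : 1 ≤ k ≤ n, k ≠ i, k ≠ j}, and let p be the orthogonal projection of ℝ^{n+1} onto the orthogonal complement of the span of S. Write ᾱ_i = p(α_i) and ᾱ_j = p(α_j). Then ᾱ_i and ᾱ_j are linearly independent and the set of reduced restricted roots Σ_red(S) equals {±ᾱ_i, ±ᾱ_j, ±(ᾱ_i + ᾱ_j)}. -/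
noncomputable section

/-- The `k`-th standard basis vector of `ℝ^N`. -/
def e {N : ℕ} (k : Fin N) : EuclideanSpace ℝ (Fin N) := EuclideanSpace.single k 1

/-- Orthogonal projection of `ℝ^N` onto the orthogonal complement of the span of `S`. -/
def projC {N : ℕ} (S : Set (EuclideanSpace ℝ (Fin N))) (v : EuclideanSpace ℝ (Fin N)) :
    EuclideanSpace ℝ (Fin N) :=
  (Submodule.orthogonalProjection ((Submodule.span ℝ S)ᗮ) v : EuclideanSpace ℝ (Fin N))

/-- The set of restricted roots `Σ(S) = p(Σ) \ {0}`. -/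
def restrictedRoots {N : ℕ} (Rts S : Set (EuclideanSpace ℝ (Fin N))) :
    Set (EuclideanSpace ℝ (Fin N)) :=
  (projC S '' Rts) \ {0}

/-- The set of reduced restricted roots: those `x ∈ Σ(S)` with `x/2 ∉ Σ(S)`. -/
def reducedRestrictedRoots {N : ℕ} (Rts S : Set (EuclideanSpace ℝ (Fin N))) :
    Set (EuclideanSpace ℝ (Fin N)) :=
  {x ∈ restrictedRoots Rts S | ¬ (1 / 2 : ℝ) • x ∈ restrictedRoots Rts S}

/-- The root system of type `A_n` in `ℝ^{n+1}`. -/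
def Aroots (n : ℕ) : Set (EuclideanSpace ℝ (Fin (n + 1))) :=
  {v | ∃ k l : Fin (n + 1), k ≠ l ∧ v = e k - e l}

/-- The simple roots `α_k = e_k − e_{k+1}` (`1 ≤ k ≤ n`, here indexed by `Fin n`). -/
def Asimple (n : ℕ) (k : Fin n) : EuclideanSpace ℝ (Fin (n + 1)) := e k.castSucc - e k.succ

namespace St5

lemma inner_euc {N : ℕ} (x y : EuclideanSpace ℝ (Fin N)) :
    (inner ℝ x y : ℝ) = ∑ m, x m * y m := by
  simp [PiLp.inner_apply, RCLike.inner_apply, mul_comm]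

lemma inner_esub {N : ℕ} (k l : Fin N) (x : EuclideanSpace ℝ (Fin N)) :
    (inner ℝ (e k - e l) x : ℝ) = x k - x l := by
  simp [inner_euc, PiLp.sub_apply, e, EuclideanSpace.single_apply, sub_mul,
    Finset.sum_sub_distrib]

lemma mem_orth_span_iff {N : ℕ} (S : Set (EuclideanSpace ℝ (Fin N)))
    (x : EuclideanSpace ℝ (Fin N)) :
    x ∈ (Submodule.span ℝ S)ᗮ ↔ ∀ s ∈ S, (inner ℝ s x : ℝ) = 0 := by
  rw [Submodule.mem_orthogonal]
  constructor
  · exact fun h s hs => h s (Submodule.subset_span hs)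
  · intro h u hu
    induction hu using Submodule.span_induction with
    | mem s hs => exact h s hs
    | zero => simp
    | add a b _ _ ha hb => simp [inner_add_left, ha, hb]
    | smul r a _ ha => simp [inner_smul_left, ha]

variable {n : ℕ} (i j : Fin n) {S : Set (EuclideanSpace ℝ (Fin (n + 1)))}

/-- Which of the three blocks an index belongs to. -/
def blk (i j : Fin n) (k : Fin (n+1)) : Fin 3 :=
  if (k : ℕ) ≤ (i : ℕ) then 0 else if (k : ℕ) ≤ (j : ℕ) then 1 else 2

def fib (t : Fin 3) : Finset (Fin (n+1)) := Finset.univ.filter (fun m => blk i j m = t)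

def cnt (t : Fin 3) : ℕ := (fib i j t).card

/-- The normalized indicator vector of a block. -/
def uu (t : Fin 3) : EuclideanSpace ℝ (Fin (n+1)) :=
  WithLp.toLp 2 fun m => if blk i j m = t then ((cnt i j t : ℝ))⁻¹ else 0

def rep (t : Fin 3) : Fin (n+1) := ![i.castSucc, j.castSucc, j.succ] t

lemma blk_rep (hij : i < j) (t : Fin 3) : blk i j (rep i j t) = t := by
  have h : (i : ℕ) < (j : ℕ) := hij
  fin_cases t <;> simp [blk, rep] <;> omega

lemma cnt_pos (hij : i < j) (t : Fin 3) : 0 < cnt i j t :=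
  Finset.card_pos.2 ⟨rep i j t, by simp [fib, blk_rep i j hij]⟩

lemma uu_apply (t : Fin 3) (m : Fin (n+1)) :
    uu i j t m = if blk i j m = t then ((cnt i j t : ℝ))⁻¹ else 0 := rfl

lemma uu_apply_rep (hij : i < j) (t s : Fin 3) :
    uu i j t (rep i j s) = if s = t then ((cnt i j t : ℝ))⁻¹ else 0 := by
  rw [uu_apply, blk_rep i j hij]

lemma blk_between {k l m : Fin (n+1)} (h1 : (k:ℕ) ≤ m) (h2 : (m:ℕ) ≤ l)
    (hb : blk i j k = blk i j l) : blk i j m = blk i j k := by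
  unfold blk at *
  split_ifs at * <;> first | rfl | omega

lemma ne_of_blk_adj (hij : i < j) (m : ℕ) (hm : m < n) (hm1 : m + 1 < n + 1)
    (hb : blk i j ⟨m, by omega⟩ = blk i j ⟨m+1, hm1⟩) : m ≠ (i:ℕ) ∧ m ≠ (j:ℕ) := by
  have h : (i : ℕ) < (j : ℕ) := hij
  unfold blk at hb
  constructor <;> rintro rfl <;> simp only at hb <;>
    split_ifs at hb <;> omega

lemma const_of_mem_orth (hij : i < j)
    (hS : S = {v | ∃ k : Fin n, k ≠ i ∧ k ≠ j ∧ v = Asimple n k})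
    {x : EuclideanSpace ℝ (Fin (n+1))} (hx : x ∈ (Submodule.span ℝ S)ᗮ) :
    ∀ k l : Fin (n+1), blk i j k = blk i j l → x k = x l := by
  have adj : ∀ (m : ℕ) (hm1 : m + 1 < n + 1),
      blk i j ⟨m, by omega⟩ = blk i j ⟨m+1, hm1⟩ → x ⟨m, by omega⟩ = x ⟨m+1, hm1⟩ := by
    intro m hm1 hb
    have hm : m < n := by omega
    obtain ⟨hi, hj⟩ := ne_of_blk_adj i j hij m hm hm1 hb
    have hmem : Asimple n ⟨m, hm⟩ ∈ S := by
      rw [hS]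
      exact ⟨⟨m, hm⟩, by simp [Fin.ext_iff, hi], by simp [Fin.ext_iff, hj], rfl⟩
    have h0 := (mem_orth_span_iff S x).1 hx _ hmem
    rw [Asimple, inner_esub] at h0
    have e1 : (⟨m, hm⟩ : Fin n).castSucc = (⟨m, by omega⟩ : Fin (n+1)) := rfl
    have e2 : (⟨m, hm⟩ : Fin n).succ = (⟨m+1, hm1⟩ : Fin (n+1)) := rfl
    rw [e1, e2] at h0
    linarith
  have aux : ∀ (d : ℕ) (k l : Fin (n+1)), (k:ℕ) + d = (l:ℕ) →
      blk i j k = blk i j l → x k = x l := by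
    intro d
    induction d with
    | zero => intro k l h hb; have : k = l := Fin.ext (by omega); rw [this]
    | succ d ih =>
      intro k l h hb
      have hk1 : (k:ℕ) + 1 < n + 1 := by have := l.isLt; omega
      set k' : Fin (n+1) := ⟨(k:ℕ)+1, hk1⟩ with hk'
      have hbk' : blk i j k' = blk i j k :=
        blk_between i j (k := k) (l := l) (m := k') (by show (k:ℕ) ≤ (k:ℕ)+1; omega) (by show (k:ℕ)+1 ≤ (l:ℕ); omega) hb
      have h1 : x k = x k' := adj (k:ℕ) hk1 hbk'.symm
      rw [h1]
      exact ih k' l (by show (k:ℕ)+1+d = (l:ℕ); omega) (by rw [hbk']; exact hb)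
  intro k l hb
  rcases le_total (k:ℕ) (l:ℕ) with h | h
  · exact aux ((l:ℕ) - (k:ℕ)) k l (by omega) hb
  · exact (aux ((k:ℕ) - (l:ℕ)) l k (by omega) hb.symm).symm

/-- The candidate projection: average over each block. -/
def Pv (v : EuclideanSpace ℝ (Fin (n+1))) : EuclideanSpace ℝ (Fin (n+1)) :=
  WithLp.toLp 2 fun m => (∑ k ∈ fib i j (blk i j m), v k) / (cnt i j (blk i j m) : ℝ)

lemma blk_cs (k : Fin n) (hki : k ≠ i) (hkj : k ≠ j) :
    blk i j k.castSucc = blk i j k.succ := by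
  have h1 : (k:ℕ) ≠ (i:ℕ) := fun h => hki (Fin.ext h)
  have h2 : (k:ℕ) ≠ (j:ℕ) := fun h => hkj (Fin.ext h)
  unfold blk
  simp only [Fin.coe_castSucc, Fin.val_succ]
  split_ifs <;> first | rfl | omega

lemma proj_eq (hij : i < j)
    (hS : S = {v | ∃ k : Fin n, k ≠ i ∧ k ≠ j ∧ v = Asimple n k})
    (v : EuclideanSpace ℝ (Fin (n+1))) : projC S v = Pv i j v := by
  have hP : Pv i j v ∈ (Submodule.span ℝ S)ᗮ := by
    rw [mem_orth_span_iff]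
    rintro s hs
    rw [hS] at hs; obtain ⟨k, hki, hkj, rfl⟩ := hs
    rw [Asimple, inner_esub]
    show (∑ m ∈ fib i j (blk i j k.castSucc), v m) / (cnt i j (blk i j k.castSucc) : ℝ)
      - (∑ m ∈ fib i j (blk i j k.succ), v m) / (cnt i j (blk i j k.succ) : ℝ) = 0
    rw [blk_cs i j k hki hkj, sub_self]
  refine Submodule.eq_starProjection_of_mem_of_inner_eq_zero hP ?_
  intro w hw
  have hc := const_of_mem_orth i j hij hS hw
  show (inner ℝ (v - Pv i j v) w : ℝ) = 0
  rw [inner_euc]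
  rw [← Finset.sum_fiberwise Finset.univ (blk i j) (fun m => (v - Pv i j v) m * w m)]
  apply Finset.sum_eq_zero
  intro t _
  have hstep : ∀ m ∈ Finset.univ.filter (fun m => blk i j m = t),
      (v - Pv i j v) m * w m
        = (v m - (∑ k ∈ fib i j t, v k) / (cnt i j t : ℝ)) * w (rep i j t) := by
    intro m hm
    simp only [Finset.mem_filter] at hm
    rw [PiLp.sub_apply]
    have h1 : Pv i j v m = (∑ k ∈ fib i j t, v k) / (cnt i j t : ℝ) := by
      unfold Pv; show (∑ k ∈ fib i j (blk i j m), v k) / (cnt i j (blk i j m) : ℝ) = _; rw [hm.2]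
    rw [h1, hc m (rep i j t) (by rw [hm.2, blk_rep i j hij])]
  rw [Finset.sum_congr rfl hstep, ← Finset.sum_mul, Finset.sum_sub_distrib, Finset.sum_const]
  have hct : (cnt i j t : ℝ) ≠ 0 := Nat.cast_ne_zero.2 (cnt_pos i j hij t).ne'
  have hfib : Finset.univ.filter (fun m => blk i j m = t) = fib i j t := rfl
  rw [hfib, nsmul_eq_mul]
  have h2 : (cnt i j t : ℝ) * ((∑ k ∈ fib i j t, v k) / (cnt i j t : ℝ))
      = ∑ k ∈ fib i j t, v k := by field_simp
  rw [show ((fib i j t).card : ℝ) = (cnt i j t : ℝ) from rfl, h2, sub_self, zero_mul]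

lemma proj_root (hij : i < j)
    (hS : S = {v | ∃ k : Fin n, k ≠ i ∧ k ≠ j ∧ v = Asimple n k})
    (k l : Fin (n+1)) :
    projC S (e k - e l) = uu i j (blk i j k) - uu i j (blk i j l) := by
  rw [proj_eq i j hij hS]
  ext m
  show (∑ k' ∈ fib i j (blk i j m), (e k - e l) k') / (cnt i j (blk i j m) : ℝ)
    = uu i j (blk i j k) m - uu i j (blk i j l) m
  have hsum : ∀ a : Fin (n+1), (∑ k' ∈ fib i j (blk i j m), (e a) k')
      = if blk i j a = blk i j m then (1:ℝ) else 0 := by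
    intro a
    simp only [e, EuclideanSpace.single_apply]
    rw [Finset.sum_ite_eq' (fib i j (blk i j m)) a (fun _ => (1:ℝ))]
    simp [fib]
  simp only [PiLp.sub_apply, Finset.sum_sub_distrib, hsum, uu_apply]
  by_cases h1 : blk i j k = blk i j m <;> by_cases h2 : blk i j l = blk i j m <;>
    simp [h1, h2, eq_comm, one_div, sub_div, neg_div]

lemma blk_isucc (hij : i < j) : blk i j i.succ = 1 := by
  have h : (i:ℕ) < (j:ℕ) := hij
  unfold blk
  simp only [Fin.val_succ]
  rw [if_neg (by omega), if_pos (by omega)]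

lemma proj_ai (hij : i < j)
    (hS : S = {v | ∃ k : Fin n, k ≠ i ∧ k ≠ j ∧ v = Asimple n k}) :
    projC S (Asimple n i) = uu i j 0 - uu i j 1 := by
  have h : Asimple n i = e i.castSucc - e i.succ := rfl
  rw [h, proj_root i j hij hS, show blk i j i.castSucc = 0 from blk_rep i j hij 0,
    blk_isucc i j hij]

lemma proj_aj (hij : i < j)
    (hS : S = {v | ∃ k : Fin n, k ≠ i ∧ k ≠ j ∧ v = Asimple n k}) :
    projC S (Asimple n j) = uu i j 1 - uu i j 2 := by
  have h : Asimple n j = e j.castSucc - e j.succ := rfl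
  rw [h, proj_root i j hij hS, show blk i j j.castSucc = 1 from blk_rep i j hij 1,
    show blk i j j.succ = 2 from blk_rep i j hij 2]

lemma cnt_inv_pos (hij : i < j) (t : Fin 3) : (0:ℝ) < (cnt i j t : ℝ)⁻¹ := by
  have h : (0:ℝ) < (cnt i j t : ℝ) := Nat.cast_pos.2 (cnt_pos i j hij t)
  positivity

lemma sub_ne_zero' (hij : i < j) {t s : Fin 3} (hts : t ≠ s) :
    uu i j t - uu i j s ≠ 0 := by
  intro h
  have h0 := congrArg (fun z : EuclideanSpace ℝ (Fin (n+1)) => z (rep i j t)) h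
  simp only [PiLp.sub_apply, PiLp.zero_apply, uu_apply_rep i j hij, if_pos rfl,
    if_neg hts, sub_zero] at h0
  exact (cnt_inv_pos i j hij t).ne' h0

lemma half_ne (hij : i < j) {t s t' s' : Fin 3} (hts : t ≠ s) (hts' : t' ≠ s') :
    (1/2 : ℝ) • (uu i j t - uu i j s) ≠ uu i j t' - uu i j s' := by
  intro h
  have h0 := congrArg (fun z : EuclideanSpace ℝ (Fin (n+1)) => z (rep i j t)) h
  simp only [PiLp.smul_apply, PiLp.sub_apply, uu_apply_rep i j hij, smul_eq_mul,
    if_neg hts, sub_zero, eq_self_iff_true, if_true] at h0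
  have hc := cnt_inv_pos i j hij t
  by_cases h1 : t = t'
  · subst h1
    rw [if_pos rfl, if_neg hts'] at h0
    linarith
  · rw [if_neg h1] at h0
    by_cases h2 : t = s'
    · subst h2
      rw [if_pos rfl, zero_sub] at h0
      linarith
    · rw [if_neg h2, sub_zero] at h0
      linarith

lemma rr_eq (hij : i < j)
    (hS : S = {v | ∃ k : Fin n, k ≠ i ∧ k ≠ j ∧ v = Asimple n k}) :
    restrictedRoots (Aroots n) S
      = {x | ∃ t s : Fin 3, t ≠ s ∧ x = uu i j t - uu i j s} := by
  ext x
  simp only [restrictedRoots, Set.mem_diff, Set.mem_image, Set.mem_singleton_iff,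
    Set.mem_setOf_eq, Aroots]
  constructor
  · rintro ⟨⟨v, ⟨k, l, hkl, rfl⟩, rfl⟩, hne⟩
    refine ⟨blk i j k, blk i j l, ?_, proj_root i j hij hS k l⟩
    intro hb
    apply hne
    rw [proj_root i j hij hS, hb, sub_self]
  · rintro ⟨t, s, hts, rfl⟩
    refine ⟨⟨e (rep i j t) - e (rep i j s),
      ⟨rep i j t, rep i j s,
        fun h => hts (by rw [← blk_rep i j hij t, ← blk_rep i j hij s, h]), rfl⟩,
      by rw [proj_root i j hij hS, blk_rep i j hij, blk_rep i j hij]⟩,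
      sub_ne_zero' i j hij hts⟩

lemma six_eq :
    {x : EuclideanSpace ℝ (Fin (n+1)) | ∃ t s : Fin 3, t ≠ s ∧ x = uu i j t - uu i j s}
      = {uu i j 0 - uu i j 1, -(uu i j 0 - uu i j 1),
         uu i j 1 - uu i j 2, -(uu i j 1 - uu i j 2),
         (uu i j 0 - uu i j 1) + (uu i j 1 - uu i j 2),
         -((uu i j 0 - uu i j 1) + (uu i j 1 - uu i j 2))} := by
  ext x
  simp only [Set.mem_setOf_eq, Set.mem_insert_iff, Set.mem_singleton_iff]
  constructor
  · rintro ⟨t, s, hts, rfl⟩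
    fin_cases t <;> fin_cases s <;> first
      | exact absurd rfl hts
      | exact Or.inl rfl
      | exact Or.inr (Or.inl (neg_sub _ _).symm)
      | exact Or.inr (Or.inr (Or.inl rfl))
      | exact Or.inr (Or.inr (Or.inr (Or.inl (neg_sub _ _).symm)))
      | exact Or.inr (Or.inr (Or.inr (Or.inr (Or.inl (sub_add_sub_cancel _ _ _).symm))))
      | exact Or.inr (Or.inr (Or.inr (Or.inr (Or.inr (by rw [sub_add_sub_cancel, neg_sub]; rfl)))))
  · rintro (rfl | rfl | rfl | rfl | rfl | rfl)
    · exact ⟨0, 1, by decide, rfl⟩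
    · exact ⟨1, 0, by decide, neg_sub _ _⟩
    · exact ⟨1, 2, by decide, rfl⟩
    · exact ⟨2, 1, by decide, neg_sub _ _⟩
    · exact ⟨0, 2, by decide, sub_add_sub_cancel _ _ _⟩
    · exact ⟨2, 0, by decide, by rw [sub_add_sub_cancel, neg_sub]⟩

end St5

/-- In type `A_n` (`n ≥ 2`), removing the simple roots `α_i, α_j`
(`1 ≤ i < j ≤ n`), the projections `ᾱ_i, ᾱ_j` onto the orthogonal complement of the
span of the remaining simple roots are linearly independent, and the set of reduced
restricted roots is `{±ᾱ_i, ±ᾱ_j, ±(ᾱ_i + ᾱ_j)}` (a root system of type `A_2`). -/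
theorem statement5 (n : ℕ) (hn : 2 ≤ n) (i j : Fin n) (hij : i < j)
    (S : Set (EuclideanSpace ℝ (Fin (n + 1))))
    (hS : S = {v | ∃ k : Fin n, k ≠ i ∧ k ≠ j ∧ v = Asimple n k}) :
    LinearIndependent ℝ ![projC S (Asimple n i), projC S (Asimple n j)] ∧
    reducedRestrictedRoots (Aroots n) S =
      {projC S (Asimple n i), -projC S (Asimple n i),
       projC S (Asimple n j), -projC S (Asimple n j),
       projC S (Asimple n i) + projC S (Asimple n j),
       -(projC S (Asimple n i) + projC S (Asimple n j))} := by
  have hA := St5.proj_ai i j hij hS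
  have hB := St5.proj_aj i j hij hS
  constructor
  · rw [LinearIndependent.pair_iff]
    intro s t hst
    rw [hA, hB] at hst
    have h0 := congrArg (fun z : EuclideanSpace ℝ (Fin (n+1)) => z (St5.rep i j 0)) hst
    have h2 := congrArg (fun z : EuclideanSpace ℝ (Fin (n+1)) => z (St5.rep i j 2)) hst
    simp only [PiLp.add_apply, PiLp.smul_apply, PiLp.sub_apply, PiLp.zero_apply,
      St5.uu_apply_rep i j hij, smul_eq_mul] at h0 h2
    rw [if_true, if_neg (show (0:Fin 3) ≠ 1 by decide),
      if_neg (show (0:Fin 3) ≠ 2 by decide), sub_zero, sub_self, mul_zero, add_zero] at h0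
    rw [if_neg (show (2:Fin 3) ≠ 0 by decide), if_neg (show (2:Fin 3) ≠ 1 by decide),
      if_true, sub_self, mul_zero, zero_add, zero_sub, mul_neg, neg_eq_zero] at h2
    have hc0 := St5.cnt_inv_pos i j hij 0
    have hc2 := St5.cnt_inv_pos i j hij 2
    constructor
    · by_contra hs
      rcases mul_eq_zero.1 h0 with h | h
      · exact hs h
      · exact hc0.ne' h
    · by_contra ht
      rcases mul_eq_zero.1 h2 with h | h
      · exact ht h
      · exact hc2.ne' h
  · have hred : reducedRestrictedRoots (Aroots n) S = restrictedRoots (Aroots n) S := by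
      ext x
      simp only [reducedRestrictedRoots, Set.mem_setOf_eq, and_iff_left_iff_imp]
      intro hx hhalf
      rw [St5.rr_eq i j hij hS] at hx hhalf
      obtain ⟨t, s, hts, rfl⟩ := hx
      obtain ⟨t', s', hts', heq⟩ := hhalf
      exact St5.half_ne i j hij hts hts' heq
    rw [hred, St5.rr_eq i j hij hS, hA, hB, St5.six_eq i j]

end
end

section
/- Let n ≥ 2 and let Σ = {±e_k ± e_l : 1 ≤ k < l ≤ n} ∪ {±2e_k : 1 ≤ k ≤ n} ⊂ ℝ^n be the root system of type C_n with simple roots α_k = e_k − e_{k+1} (1 ≤ k ≤ n−1) and α_n = 2e_n. Let 1 ≤ i < n, let S = {α_k : 1 ≤ k ≤ n−1, k ≠ i}, and let p be the orthogonal projection of ℝ^n onto the orthogonal complement of the span of S. Write ᾱ_i = p(α_i) and ᾱ_n = p(α_n). Then ᾱ_i and ᾱ_n are linearly independent and the set of reduced restricted roots Σ_red(S) equals {±ᾱ_i, ±ᾱ_n, ±(ᾱ_i + ᾱ_n), ±(2ᾱ_i + ᾱ_n)}. -/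
noncomputable section

/-- The root system of type `C_n` in `ℝ^n`: `±e_k ± e_l` (`k < l`) and `±2e_k`. -/
def Croots (n : ℕ) : Set (EuclideanSpace ℝ (Fin n)) :=
  {v | ∃ k l : Fin n, k < l ∧
    (v = e k - e l ∨ v = e k + e l ∨ v = -e k + e l ∨ v = -e k - e l)} ∪
  {v | ∃ k : Fin n, v = (2 : ℝ) • e k ∨ v = -((2 : ℝ) • e k)}

/-- The simple roots of `C_n`: `α_k = e_k − e_{k+1}` (`1 ≤ k ≤ n−1`) and `α_n = 2e_n`
(indexed here by `Fin n`). -/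
def Csimple (n : ℕ) (k : Fin n) : EuclideanSpace ℝ (Fin n) :=
  if h : (k : ℕ) + 1 < n then e k - e ⟨(k : ℕ) + 1, h⟩ else (2 : ℝ) • e k

def uu (n : ℕ) (i : Fin n) : EuclideanSpace ℝ (Fin n) :=
  WithLp.toLp 2 (fun j : Fin n => if (j:ℕ) ≤ (i:ℕ) then (1:ℝ)/((i:ℕ)+1) else 0)

def ww (n : ℕ) (i : Fin n) : EuclideanSpace ℝ (Fin n) :=
  WithLp.toLp 2 (fun j : Fin n => if (j:ℕ) ≤ (i:ℕ) then 0 else (1:ℝ)/((n:ℝ)-(i:ℕ)-1))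

-- membership in K = (span S)ᗮ for vectors constant along adjacent pairs ≠ i
lemma mem_K (n : ℕ) (i : Fin n) (S : Set (EuclideanSpace ℝ (Fin n)))
    (hS : S = {v | ∃ k : Fin n, k ≠ i ∧ (k : ℕ) + 1 < n ∧ v = Csimple n k})
    (x : EuclideanSpace ℝ (Fin n))
    (hx : ∀ m : Fin n, m ≠ i → ∀ h : (m:ℕ)+1 < n, x m = x ⟨(m:ℕ)+1, h⟩) :
    x ∈ (Submodule.span ℝ S)ᗮ := by
  rw [Submodule.mem_orthogonal]
  intro g hg
  induction hg using Submodule.span_induction with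
  | mem g hg =>
      rw [hS] at hg
      obtain ⟨m, hmi, hm, rfl⟩ := hg
      rw [Csimple, dif_pos hm]
      rw [inner_sub_left]
      simp only [e, EuclideanSpace.inner_single_left, map_one, one_mul]
      rw [hx m hmi hm]
      ring
  | zero => simp
  | add a b _ _ ha hb => rw [inner_add_left, ha, hb]; ring
  | smul r a _ ha => rw [inner_smul_left, ha]; ring

lemma zsucc_of_mem (n : ℕ) (i : Fin n) (S : Set (EuclideanSpace ℝ (Fin n)))
    (hS : S = {v | ∃ k : Fin n, k ≠ i ∧ (k : ℕ) + 1 < n ∧ v = Csimple n k})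
    (z : EuclideanSpace ℝ (Fin n)) (hz : z ∈ (Submodule.span ℝ S)ᗮ)
    (m : Fin n) (hmi : m ≠ i) (h : (m:ℕ)+1 < n) : z m = z ⟨(m:ℕ)+1, h⟩ := by
  have hmem : Csimple n m ∈ Submodule.span ℝ S := by
    apply Submodule.subset_span
    rw [hS]; exact ⟨m, hmi, h, rfl⟩
  have := (Submodule.mem_orthogonal _ _).1 hz _ hmem
  rw [Csimple, dif_pos h, inner_sub_left] at this
  simp only [e, EuclideanSpace.inner_single_left, map_one, one_mul] at this
  linarith

lemma const_A (n : ℕ) (i : Fin n) (S : Set (EuclideanSpace ℝ (Fin n)))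
    (hS : S = {v | ∃ k : Fin n, k ≠ i ∧ (k : ℕ) + 1 < n ∧ v = Csimple n k})
    (z : EuclideanSpace ℝ (Fin n)) (hz : z ∈ (Submodule.span ℝ S)ᗮ) :
    ∀ d m (_ : m + d = (i:ℕ)), z ⟨m, by omega⟩ = z i := by
  intro d
  induction d with
  | zero =>
      intro m hm
      exact congrArg z.ofLp (Fin.ext (by simpa using hm))
  | succ d ih =>
      intro m hm
      have h1 : m + 1 < n := by have := i.isLt; omega
      have e1 : z ⟨m, by omega⟩ = z ⟨m+1, h1⟩ := by
        have := zsucc_of_mem n i S hS z hz ⟨m, by omega⟩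
          (by apply Fin.ne_of_val_ne; simp; omega) h1
        simpa using this
      rw [e1]
      exact ih (m+1) (by omega)

lemma const_B (n : ℕ) (i : Fin n) (hi : (i:ℕ)+1 < n) (S : Set (EuclideanSpace ℝ (Fin n)))
    (hS : S = {v | ∃ k : Fin n, k ≠ i ∧ (k : ℕ) + 1 < n ∧ v = Csimple n k})
    (z : EuclideanSpace ℝ (Fin n)) (hz : z ∈ (Submodule.span ℝ S)ᗮ) :
    ∀ m (h : m < n) (_ : (i:ℕ) < m), z ⟨m, h⟩ = z ⟨(i:ℕ)+1, hi⟩ := by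
  have key : ∀ d (h : (i:ℕ)+1+d < n), z ⟨(i:ℕ)+1+d, h⟩ = z ⟨(i:ℕ)+1, hi⟩ := by
    intro d
    induction d with
    | zero => intro h; rfl
    | succ d ih =>
        intro h
        have h2 : (i:ℕ)+1+d < n := by omega
        have e1 : z ⟨(i:ℕ)+1+d, h2⟩ = z ⟨(i:ℕ)+1+(d+1), h⟩ := by
          have := zsucc_of_mem n i S hS z hz ⟨(i:ℕ)+1+d, h2⟩
            (by apply Fin.ne_of_val_ne; simp; omega) (show ((⟨(i:ℕ)+1+d, h2⟩ : Fin n):ℕ)+1 < n by simp only [Fin.val_mk]; omega)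
          rw [this]
          rfl
        rw [← e1]
        exact ih h2
  intro m h hm
  have : z ⟨m, h⟩ = z ⟨(i:ℕ)+1+(m-((i:ℕ)+1)), by omega⟩ := by exact congrArg z.ofLp (Fin.ext (by simp; omega))
  rw [this]
  exact key _ _

lemma cardA (n : ℕ) (i : Fin n) :
    (Finset.univ.filter (fun j : Fin n => (j:ℕ) ≤ (i:ℕ))).card = (i:ℕ) + 1 := by
  have : Finset.univ.filter (fun j : Fin n => (j:ℕ) ≤ (i:ℕ)) = Finset.Iic i := by
    ext j; simp only [Finset.mem_filter, Finset.mem_univ, true_and, Finset.mem_Iic, Fin.le_def]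
  rw [this, Fin.card_Iic]

lemma cardB (n : ℕ) (i : Fin n) :
    (Finset.univ.filter (fun j : Fin n => ¬ (j:ℕ) ≤ (i:ℕ))).card = n - ((i:ℕ) + 1) := by
  have h1 := Finset.card_filter_add_card_filter_not
    (s := (Finset.univ : Finset (Fin n))) (p := fun j : Fin n => (j:ℕ) ≤ (i:ℕ))
  rw [cardA] at h1
  simp only [Finset.card_univ, Fintype.card_fin] at h1
  omega

lemma proj_e (n : ℕ) (i : Fin n) (hi : (i:ℕ)+1 < n) (S : Set (EuclideanSpace ℝ (Fin n)))
    (hS : S = {v | ∃ k : Fin n, k ≠ i ∧ (k : ℕ) + 1 < n ∧ v = Csimple n k}) (k : Fin n) :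
    projC S (e k) = if (k:ℕ) ≤ (i:ℕ) then uu n i else ww n i := by
  have hni : ((i:ℕ):ℝ) + 1 < (n:ℝ) := by exact_mod_cast hi
  rw [projC]
  by_cases hk : (k:ℕ) ≤ (i:ℕ)
  · rw [if_pos hk]
    apply Submodule.eq_starProjection_of_mem_of_inner_eq_zero
    · apply mem_K n i S hS
      intro m hmi h
      have hne : (m:ℕ) ≠ (i:ℕ) := fun hq => hmi (Fin.ext hq)
      simp only [uu, Fin.val_mk]
      split_ifs with h1 h2 <;> first | rfl | omega
    · intro z hz
      simp only [PiLp.inner_apply, RCLike.inner_apply, conj_trivial, PiLp.sub_apply, e,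
        EuclideanSpace.single_apply, uu]
      have step : ∀ j : Fin n, z j * ((if j = k then (1:ℝ) else 0) -
          (if (j:ℕ) ≤ (i:ℕ) then (1:ℝ)/((i:ℕ)+1) else 0))
          = (if j = k then z j else 0) -
            (if (j:ℕ) ≤ (i:ℕ) then ((1:ℝ)/((i:ℕ)+1)) * z j else 0) := by
        intro j; split_ifs <;> ring
      rw [Finset.sum_congr rfl (fun j _ => step j), Finset.sum_sub_distrib,
        Finset.sum_ite_eq' Finset.univ k z, if_pos (Finset.mem_univ k),
        ← Finset.sum_filter, ← Finset.mul_sum]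
      have hzin : ∀ j ∈ Finset.univ.filter (fun j : Fin n => (j:ℕ) ≤ (i:ℕ)), z j = z i := by
        intro j hj
        have hj' := (Finset.mem_filter.1 hj).2
        have := const_A n i S hS z hz ((i:ℕ) - (j:ℕ)) (j:ℕ) (by omega)
        simpa using this
      rw [Finset.sum_congr rfl hzin, Finset.sum_const, cardA, nsmul_eq_mul]
      have hzk : z k = z i := by
        have := const_A n i S hS z hz ((i:ℕ) - (k:ℕ)) (k:ℕ) (by omega)
        simpa using this
      rw [hzk]
      push_cast
      field_simp
      ring
  · rw [if_neg hk]
    apply Submodule.eq_starProjection_of_mem_of_inner_eq_zero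
    · apply mem_K n i S hS
      intro m hmi h
      have hne : (m:ℕ) ≠ (i:ℕ) := fun hq => hmi (Fin.ext hq)
      simp only [ww, Fin.val_mk]
      split_ifs with h1 h2 <;> first | rfl | omega
    · intro z hz
      simp only [PiLp.inner_apply, RCLike.inner_apply, conj_trivial, PiLp.sub_apply, e,
        EuclideanSpace.single_apply, ww]
      have step : ∀ j : Fin n, z j * ((if j = k then (1:ℝ) else 0) -
          (if (j:ℕ) ≤ (i:ℕ) then 0 else (1:ℝ)/((n:ℝ)-(i:ℕ)-1)))
          = (if j = k then z j else 0) -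
            (if ¬ (j:ℕ) ≤ (i:ℕ) then ((1:ℝ)/((n:ℝ)-(i:ℕ)-1)) * z j else 0) := by
        intro j; split_ifs <;> first | ring | omega
      rw [Finset.sum_congr rfl (fun j _ => step j), Finset.sum_sub_distrib,
        Finset.sum_ite_eq' Finset.univ k z, if_pos (Finset.mem_univ k),
        ← Finset.sum_filter, ← Finset.mul_sum]
      have hzin : ∀ j ∈ Finset.univ.filter (fun j : Fin n => ¬ (j:ℕ) ≤ (i:ℕ)),
          z j = z ⟨(i:ℕ)+1, hi⟩ := by
        intro j hj
        have hj' := (Finset.mem_filter.1 hj).2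
        have := const_B n i hi S hS z hz (j:ℕ) j.isLt (by omega)
        simpa using this
      rw [Finset.sum_congr rfl hzin, Finset.sum_const, cardB, nsmul_eq_mul]
      have hzk : z k = z ⟨(i:ℕ)+1, hi⟩ := const_B n i hi S hS z hz (k:ℕ) k.isLt (by omega) ▸ by
        exact congrArg z (Fin.ext rfl)
      have hcast : ((n - ((i:ℕ)+1) : ℕ) : ℝ) = (n:ℝ) - (i:ℕ) - 1 := by
        push_cast [Nat.cast_sub (by omega : (i:ℕ)+1 ≤ n)]; ring
      rw [hcast]
      have hzk' : z k = z ⟨(i:ℕ)+1, hi⟩ := by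
        have := const_B n i hi S hS z hz (k:ℕ) k.isLt (by omega)
        simpa using this
      rw [hzk']
      have hne2 : (n:ℝ) - (i:ℕ) - 1 ≠ 0 := by linarith
      field_simp
      ring

lemma projC_add {N : ℕ} (S : Set (EuclideanSpace ℝ (Fin N))) (x y : EuclideanSpace ℝ (Fin N)) :
    projC S (x + y) = projC S x + projC S y := by
  simp only [projC, map_add, Submodule.coe_add]

lemma projC_smul {N : ℕ} (S : Set (EuclideanSpace ℝ (Fin N))) (c : ℝ) (x : EuclideanSpace ℝ (Fin N)) :
    projC S (c • x) = c • projC S x := by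
  simp only [projC, map_smul, Submodule.coe_smul]

lemma projC_neg {N : ℕ} (S : Set (EuclideanSpace ℝ (Fin N))) (x : EuclideanSpace ℝ (Fin N)) :
    projC S (-x) = -projC S x := by
  simp only [projC, map_neg, Submodule.coe_neg]

lemma projC_sub {N : ℕ} (S : Set (EuclideanSpace ℝ (Fin N))) (x y : EuclideanSpace ℝ (Fin N)) :
    projC S (x - y) = projC S x - projC S y := by
  simp only [projC, map_sub, Submodule.coe_sub]

set_option maxHeartbeats 2000000 in
/-- In type `C_n` (`n ≥ 2`), removing the simple roots `α_i`
(`1 ≤ i < n`) and `α_n`, the projections `ᾱ_i, ᾱ_n` onto the orthogonal complement of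
the span of the remaining simple roots are linearly independent, and the set of reduced
restricted roots is `{±ᾱ_i, ±ᾱ_n, ±(ᾱ_i + ᾱ_n), ±(2ᾱ_i + ᾱ_n)}` (type `B_2`). -/
theorem statement9 (n : ℕ) (hn : 2 ≤ n) (i : Fin n) (hi : (i : ℕ) + 1 < n)
    (S : Set (EuclideanSpace ℝ (Fin n)))
    (hS : S = {v | ∃ k : Fin n, k ≠ i ∧ (k : ℕ) + 1 < n ∧ v = Csimple n k}) :
    LinearIndependent ℝ
      ![projC S (Csimple n i), projC S (Csimple n ⟨n - 1, by omega⟩)] ∧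
    reducedRestrictedRoots (Croots n) S =
      {projC S (Csimple n i), -projC S (Csimple n i),
       projC S (Csimple n ⟨n - 1, by omega⟩), -projC S (Csimple n ⟨n - 1, by omega⟩),
       projC S (Csimple n i) + projC S (Csimple n ⟨n - 1, by omega⟩),
       -(projC S (Csimple n i) + projC S (Csimple n ⟨n - 1, by omega⟩)),
       (2 : ℝ) • projC S (Csimple n i) + projC S (Csimple n ⟨n - 1, by omega⟩),
       -((2 : ℝ) • projC S (Csimple n i) + projC S (Csimple n ⟨n - 1, by omega⟩))} := by
  have hni : ((i:ℕ):ℝ) + 1 < (n:ℝ) := by exact_mod_cast hi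
  have hca : (0:ℝ) < 1/(((i:ℕ):ℝ)+1) := by positivity
  have hcb : (0:ℝ) < 1/((n:ℝ)-((i:ℕ):ℝ)-1) := by
    apply div_pos one_pos; linarith
  have hlnot : ¬ ((⟨(i:ℕ)+1, hi⟩ : Fin n) : ℕ) ≤ (i:ℕ) := by
    rw [Fin.val_mk]; omega
  have hUi : uu n i i = 1/(((i:ℕ):ℝ)+1) := by
    simp only [uu]; rw [if_pos le_rfl]
  have hUl : uu n i ⟨(i:ℕ)+1, hi⟩ = 0 := by
    simp only [uu]; rw [if_neg hlnot]
  have hWi : ww n i i = 0 := by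
    simp only [ww]; rw [if_pos le_rfl]
  have hWl : ww n i ⟨(i:ℕ)+1, hi⟩ = 1/((n:ℝ)-((i:ℕ):ℝ)-1) := by
    simp only [ww]; rw [if_neg hlnot]
  have hpe := proj_e n i hi S hS
  have hpi : projC S (Csimple n i) = uu n i - ww n i := by
    rw [Csimple, dif_pos hi, projC_sub, hpe, hpe, if_pos le_rfl, if_neg hlnot]
  have hn1 : ¬ ((⟨n-1, show n-1 < n by omega⟩ : Fin n) : ℕ) + 1 < n := by
    rw [Fin.val_mk]; omega
  have hn1' : ¬ ((⟨n-1, show n-1 < n by omega⟩ : Fin n) : ℕ) ≤ (i:ℕ) := by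
    rw [Fin.val_mk]; omega
  have hpn : projC S (Csimple n ⟨n-1, show n-1 < n by omega⟩) = (2:ℝ) • ww n i := by
    rw [Csimple, dif_neg hn1, projC_smul, hpe, if_neg hn1']
  rw [hpi, hpn]
  -- the target set
  set T : Set (EuclideanSpace ℝ (Fin n)) :=
    {uu n i - ww n i, -(uu n i - ww n i), (2:ℝ) • ww n i, -((2:ℝ) • ww n i),
     uu n i - ww n i + (2:ℝ) • ww n i, -(uu n i - ww n i + (2:ℝ) • ww n i),
     (2:ℝ) • (uu n i - ww n i) + (2:ℝ) • ww n i,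
     -((2:ℝ) • (uu n i - ww n i) + (2:ℝ) • ww n i)} with hT
  -- membership helpers
  have memA1 : uu n i - ww n i ∈ T := by rw [hT]; left; rfl
  have memA2 : -uu n i + ww n i ∈ T := by
    rw [hT]; right; left; module
  have memA3 : uu n i + uu n i ∈ T := by
    rw [hT]; right; right; right; right; right; right; left; module
  have memA4 : uu n i + ww n i ∈ T := by
    rw [hT]; right; right; right; right; left; module
  have memA5 : ww n i + ww n i ∈ T := by
    rw [hT]; right; right; left; module
  have memA6 : -uu n i - uu n i ∈ T := by
    rw [hT]; right; right; right; right; right; right; right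
    rw [Set.mem_singleton_iff]; module
  have memA7 : -uu n i - ww n i ∈ T := by
    rw [hT]; right; right; right; right; right; left; module
  have memA8 : -ww n i - ww n i ∈ T := by
    rw [hT]; right; right; right; left; module
  have memA9 : (2:ℝ) • uu n i ∈ T := by
    rw [hT]; right; right; right; right; right; right; left; module
  have memA10 : (2:ℝ) • ww n i ∈ T := by rw [hT]; right; right; left; rfl
  have memA11 : -((2:ℝ) • uu n i) ∈ T := by
    rw [hT]; right; right; right; right; right; right; right
    rw [Set.mem_singleton_iff]; module
  have memA12 : -((2:ℝ) • ww n i) ∈ T := by rw [hT]; right; right; right; left; rfl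
  have hrestrict : restrictedRoots (Croots n) S = T := by
    apply Set.eq_of_subset_of_subset
    · rintro x ⟨⟨v, hv, rfl⟩, hx0⟩
      rcases hv with ⟨k, l, hkl, hv⟩ | ⟨k, hv | hv⟩
      · have hklv : (k:ℕ) < (l:ℕ) := Fin.lt_def.mp hkl
        rcases hv with rfl | rfl | rfl | rfl
        · rw [projC_sub, hpe, hpe] at hx0 ⊢
          by_cases hk : (k:ℕ) ≤ (i:ℕ)
          · rw [if_pos hk] at hx0 ⊢
            by_cases hl : (l:ℕ) ≤ (i:ℕ)
            · rw [if_pos hl] at hx0 ⊢; exact absurd (by simp) hx0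
            · rw [if_neg hl] at hx0 ⊢; exact memA1
          · have hl : ¬ (l:ℕ) ≤ (i:ℕ) := by omega
            rw [if_neg hk, if_neg hl] at hx0 ⊢; exact absurd (by simp) hx0
        · rw [projC_add, hpe, hpe] at hx0 ⊢
          by_cases hk : (k:ℕ) ≤ (i:ℕ)
          · rw [if_pos hk] at hx0 ⊢
            by_cases hl : (l:ℕ) ≤ (i:ℕ)
            · rw [if_pos hl] at hx0 ⊢; exact memA3
            · rw [if_neg hl] at hx0 ⊢; exact memA4
          · have hl : ¬ (l:ℕ) ≤ (i:ℕ) := by omega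
            rw [if_neg hk, if_neg hl] at hx0 ⊢; exact memA5
        · rw [projC_add, projC_neg, hpe, hpe] at hx0 ⊢
          by_cases hk : (k:ℕ) ≤ (i:ℕ)
          · rw [if_pos hk] at hx0 ⊢
            by_cases hl : (l:ℕ) ≤ (i:ℕ)
            · rw [if_pos hl] at hx0 ⊢; exact absurd (by simp) hx0
            · rw [if_neg hl] at hx0 ⊢; exact memA2
          · have hl : ¬ (l:ℕ) ≤ (i:ℕ) := by omega
            rw [if_neg hk, if_neg hl] at hx0 ⊢; exact absurd (by simp) hx0
        · rw [projC_sub, projC_neg, hpe, hpe] at hx0 ⊢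
          by_cases hk : (k:ℕ) ≤ (i:ℕ)
          · rw [if_pos hk] at hx0 ⊢
            by_cases hl : (l:ℕ) ≤ (i:ℕ)
            · rw [if_pos hl] at hx0 ⊢; exact memA6
            · rw [if_neg hl] at hx0 ⊢; exact memA7
          · have hl : ¬ (l:ℕ) ≤ (i:ℕ) := by omega
            rw [if_neg hk, if_neg hl] at hx0 ⊢; exact memA8
      · subst hv
        rw [projC_smul, hpe] at hx0 ⊢
        by_cases hk : (k:ℕ) ≤ (i:ℕ)
        · rw [if_pos hk] at hx0 ⊢; exact memA9
        · rw [if_neg hk] at hx0 ⊢; exact memA10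
      · subst hv
        rw [projC_neg, projC_smul, hpe] at hx0 ⊢
        by_cases hk : (k:ℕ) ≤ (i:ℕ)
        · rw [if_pos hk] at hx0 ⊢; exact memA11
        · rw [if_neg hk] at hx0 ⊢; exact memA12
    · intro x hx
      have hlt : i < (⟨(i:ℕ)+1, hi⟩ : Fin n) := by
        rw [Fin.lt_def]; exact Nat.lt_succ_self _
      rw [hT] at hx
      simp only [Set.mem_insert_iff, Set.mem_singleton_iff] at hx
      have hpsub : projC S (e i - e ⟨(i:ℕ)+1, hi⟩) = uu n i - ww n i := by
        rw [projC_sub, hpe, hpe, if_pos le_rfl, if_neg hlnot]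
      have hpadd : projC S (e i + e ⟨(i:ℕ)+1, hi⟩) = uu n i + ww n i := by
        rw [projC_add, hpe, hpe, if_pos le_rfl, if_neg hlnot]
      have hp2i : projC S ((2:ℝ) • e i) = (2:ℝ) • uu n i := by
        rw [projC_smul, hpe, if_pos le_rfl]
      have hp2l : projC S ((2:ℝ) • e ⟨(i:ℕ)+1, hi⟩) = (2:ℝ) • ww n i := by
        rw [projC_smul, hpe, if_neg hlnot]
      have nzi : ∀ y : EuclideanSpace ℝ (Fin n), y i ≠ 0 → y ∉ ({0} : Set _) := by
        intro y hy h; rw [Set.mem_singleton_iff] at h; exact hy (by rw [h]; rfl)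
      have nzl : ∀ y : EuclideanSpace ℝ (Fin n), y ⟨(i:ℕ)+1, hi⟩ ≠ 0 → y ∉ ({0} : Set _) := by
        intro y hy h; rw [Set.mem_singleton_iff] at h; exact hy (by rw [h]; rfl)
      rcases hx with rfl | rfl | rfl | rfl | rfl | rfl | rfl | rfl
      · refine ⟨⟨e i - e ⟨(i:ℕ)+1, hi⟩, Or.inl ⟨i, _, hlt, Or.inl rfl⟩, hpsub⟩, ?_⟩
        apply nzi
        simp only [PiLp.sub_apply, hUi, hWi]
        linarith
      · refine ⟨⟨-e i + e ⟨(i:ℕ)+1, hi⟩, Or.inl ⟨i, _, hlt, Or.inr (Or.inr (Or.inl rfl))⟩, ?_⟩, ?_⟩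
        · rw [projC_add, projC_neg, hpe, hpe, if_pos le_rfl, if_neg hlnot]; module
        · apply nzi
          simp only [PiLp.neg_apply, PiLp.sub_apply, hUi, hWi]
          linarith
      · refine ⟨⟨(2:ℝ) • e ⟨(i:ℕ)+1, hi⟩, Or.inr ⟨_, Or.inl rfl⟩, hp2l⟩, ?_⟩
        apply nzl
        simp only [PiLp.smul_apply, hWl, smul_eq_mul]
        linarith
      · refine ⟨⟨-((2:ℝ) • e ⟨(i:ℕ)+1, hi⟩), Or.inr ⟨_, Or.inr rfl⟩, ?_⟩, ?_⟩
        · rw [projC_neg, hp2l]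
        · apply nzl
          simp only [PiLp.neg_apply, PiLp.smul_apply, hWl, smul_eq_mul]
          linarith
      · refine ⟨⟨e i + e ⟨(i:ℕ)+1, hi⟩, Or.inl ⟨i, _, hlt, Or.inr (Or.inl rfl)⟩, ?_⟩, ?_⟩
        · rw [hpadd]; module
        · apply nzi
          simp only [PiLp.add_apply, PiLp.smul_apply, PiLp.sub_apply, hUi, hWi, smul_eq_mul]
          linarith
      · refine ⟨⟨-e i - e ⟨(i:ℕ)+1, hi⟩, Or.inl ⟨i, _, hlt, Or.inr (Or.inr (Or.inr rfl))⟩, ?_⟩, ?_⟩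
        · rw [projC_sub, projC_neg, hpe, hpe, if_pos le_rfl, if_neg hlnot]; module
        · apply nzi
          simp only [PiLp.neg_apply, PiLp.add_apply, PiLp.smul_apply, PiLp.sub_apply,
            hUi, hWi, smul_eq_mul]
          linarith
      · refine ⟨⟨(2:ℝ) • e i, Or.inr ⟨_, Or.inl rfl⟩, ?_⟩, ?_⟩
        · rw [hp2i]; module
        · apply nzi
          simp only [PiLp.add_apply, PiLp.smul_apply, PiLp.sub_apply, hUi, hWi, smul_eq_mul]
          linarith
      · refine ⟨⟨-((2:ℝ) • e i), Or.inr ⟨_, Or.inr rfl⟩, ?_⟩, ?_⟩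
        · rw [projC_neg, hp2i]; module
        · apply nzi
          simp only [PiLp.neg_apply, PiLp.add_apply, PiLp.smul_apply, PiLp.sub_apply,
            hUi, hWi, smul_eq_mul]
          linarith
  constructor
  · refine LinearIndependent.pair_iff.mpr (fun s t hst => ?_)
    have h1 := congrFun (congrArg WithLp.ofLp hst) i
    have h2 := congrFun (congrArg WithLp.ofLp hst) ⟨(i:ℕ)+1, hi⟩
    simp only [PiLp.add_apply, PiLp.smul_apply, PiLp.sub_apply, PiLp.zero_apply,
      smul_eq_mul, hUi, hUl, hWi, hWl] at h1 h2
    have hs : s = 0 := by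
      rcases mul_eq_zero.mp (by linarith : s * (1/(((i:ℕ):ℝ)+1)) = 0) with h | h
      · exact h
      · exact absurd h (ne_of_gt hca)
    subst hs
    refine ⟨rfl, ?_⟩
    rcases mul_eq_zero.mp (by linarith : t * (2 * (1/((n:ℝ)-((i:ℕ):ℝ)-1))) = 0) with h | h
    · exact h
    · nlinarith
  · have hred : reducedRestrictedRoots (Croots n) S = restrictedRoots (Croots n) S := by
      apply Set.eq_of_subset_of_subset
      · exact fun x hx => hx.1
      · intro x hx
        refine ⟨hx, ?_⟩
        rw [hrestrict] at hx ⊢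
        rw [hT] at hx
        simp only [Set.mem_insert_iff, Set.mem_singleton_iff] at hx
        intro hmem
        rw [hT] at hmem
        simp only [Set.mem_insert_iff, Set.mem_singleton_iff] at hmem
        rcases hx with rfl | rfl | rfl | rfl | rfl | rfl | rfl | rfl <;>
          rcases hmem with h | h | h | h | h | h | h | h <;>
          · have h1 := congrFun (congrArg WithLp.ofLp h) i
            have h2 := congrFun (congrArg WithLp.ofLp h) ⟨(i:ℕ)+1, hi⟩
            simp only [PiLp.smul_apply, PiLp.add_apply, PiLp.sub_apply, PiLp.neg_apply,
              smul_eq_mul, hUi, hUl, hWi, hWl] at h1 h2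
            linarith
    rw [hred, hrestrict]

end
end

section
/- Let Σ ⊂ ℝ^4 be the root system of type F_4, i.e. Σ = {±e_i ± e_j : 1 ≤ i < j ≤ 4} ∪ {±e_i : 1 ≤ i ≤ 4} ∪ {(±e_1 ± e_2 ± e_3 ± e_4)/2}, with simple roots α_1 = e_2 − e_3, α_2 = e_3 − e_4, α_3 = e_4, α_4 = (e_1 − e_2 − e_3 − e_4)/2. Let S = {α_3, α_4} and let p be the orthogonal projection of ℝ^4 onto the orthogonal complement of the span of S. Write ᾱ_1 = p(α_1) and ᾱ_2 = p(α_2). Then ᾱ_1 and ᾱ_2 are linearly independent and the set of reduced restricted roots Σ_red(S) equals {±ᾱ_1, ±ᾱ_2, ±(ᾱ_1 + ᾱ_2), ±(ᾱ_1 + 2ᾱ_2), ±(ᾱ_1 + 3ᾱ_2), ±(2ᾱ_1 + 3ᾱ_2)}. -/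
noncomputable section

/-- The root system of type `F_4` in `ℝ^4`: `±e_i ± e_j` (`i < j`), `±e_i`, and
`(±e_1 ± e_2 ± e_3 ± e_4)/2`. -/
def F4roots : Set (EuclideanSpace ℝ (Fin 4)) :=
  {v | ∃ k l : Fin 4, k < l ∧
    (v = e k - e l ∨ v = e k + e l ∨ v = -e k + e l ∨ v = -e k - e l)} ∪
  {v | ∃ k : Fin 4, v = e k ∨ v = -e k} ∪
  {v | ∃ ε : Fin 4 → ℝ, (∀ i, ε i = 1 ∨ ε i = -1) ∧ v = (1 / 2 : ℝ) • ∑ i, ε i • e i}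

/-- `α_1 = e_2 − e_3`. -/
def α1 : EuclideanSpace ℝ (Fin 4) := e 1 - e 2
/-- `α_2 = e_3 − e_4`. -/
def α2 : EuclideanSpace ℝ (Fin 4) := e 2 - e 3
/-- `α_3 = e_4`. -/
def α3 : EuclideanSpace ℝ (Fin 4) := e 3
/-- `α_4 = (e_1 − e_2 − e_3 − e_4)/2`. -/
def α4 : EuclideanSpace ℝ (Fin 4) := (1 / 2 : ℝ) • (e 0 - e 1 - e 2 - e 3)

/- ### Auxiliary machinery -/

/-- A convenient explicit vector in `ℝ^4`. -/
def vec (a b c d : ℝ) : EuclideanSpace ℝ (Fin 4) :=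
  a • e 0 + b • e 1 + c • e 2 + d • e 3

lemma vec_apply (a b c d : ℝ) (i : Fin 4) : vec a b c d i = ![a,b,c,d] i := by
  fin_cases i <;>
    simp [vec, e, EuclideanSpace.single_apply, PiLp.add_apply, PiLp.smul_apply]

lemma vec_inj {a b c d a' b' c' d' : ℝ} :
    vec a b c d = vec a' b' c' d' ↔ a = a' ∧ b = b' ∧ c = c' ∧ d = d' := by
  constructor
  · intro h
    refine ⟨?_, ?_, ?_, ?_⟩
    · have := congrArg (fun v => v 0) h; simpa [vec_apply] using this
    · have := congrArg (fun v => v 1) h; simpa [vec_apply] using this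
    · have := congrArg (fun v => v 2) h; simpa [vec_apply] using this
    · have := congrArg (fun v => v 3) h; simpa [vec_apply] using this
  · rintro ⟨rfl, rfl, rfl, rfl⟩; rfl

lemma vec_add (a b c d a' b' c' d' : ℝ) :
    vec a b c d + vec a' b' c' d' = vec (a+a') (b+b') (c+c') (d+d') := by
  simp only [vec]; module

lemma vec_sub (a b c d a' b' c' d' : ℝ) :
    vec a b c d - vec a' b' c' d' = vec (a-a') (b-b') (c-c') (d-d') := by
  simp only [vec]; module

lemma vec_neg (a b c d : ℝ) : -vec a b c d = vec (-a) (-b) (-c) (-d) := by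
  simp only [vec]; module

lemma vec_smul (r a b c d : ℝ) : r • vec a b c d = vec (r*a) (r*b) (r*c) (r*d) := by
  simp only [vec]; module

lemma vec_zero : vec 0 0 0 0 = 0 := by simp only [vec]; module

lemma vec_eq_zero {a b c d : ℝ} : vec a b c d = 0 ↔ a = 0 ∧ b = 0 ∧ c = 0 ∧ d = 0 := by
  rw [← vec_zero, vec_inj]

lemma he0 : e 0 = vec 1 0 0 0 := by simp only [vec]; module
lemma he1 : e 1 = vec 0 1 0 0 := by simp only [vec]; module
lemma he2 : e 2 = vec 0 0 1 0 := by simp only [vec]; module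
lemma he3 : e 3 = vec 0 0 0 1 := by simp only [vec]; module

lemma inner_vec (a b c d a' b' c' d' : ℝ) :
    (inner ℝ (vec a b c d) (vec a' b' c' d') : ℝ) = a*a' + b*b' + c*c' + d*d' := by
  rw [PiLp.inner_apply, Fin.sum_univ_four]
  simp [vec_apply, RCLike.inner_apply, conj_trivial]
  ring

lemma hα3 : α3 = vec 0 0 0 1 := by simp only [α3, vec]; module
lemma hα4 : α4 = vec (1/2) (-(1/2)) (-(1/2)) (-(1/2)) := by simp only [α4, vec]; module

lemma mem_orth (w : EuclideanSpace ℝ (Fin 4))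
    (h3 : (inner ℝ α3 w : ℝ) = 0) (h4 : (inner ℝ α4 w : ℝ) = 0) :
    w ∈ (Submodule.span ℝ ({α3, α4} : Set (EuclideanSpace ℝ (Fin 4))))ᗮ := by
  rw [Submodule.mem_orthogonal]
  intro u hu
  induction hu using Submodule.span_induction with
  | mem x hx => rcases hx with rfl | rfl; exact h3; exact h4
  | zero => simp
  | add x y _ _ hx hy => rw [inner_add_left, hx, hy, add_zero]
  | smul r x _ hx => rw [real_inner_smul_left, hx, mul_zero]

/-- Explicit formula for the projection onto the orthogonal complement of `span {α3, α4}`. -/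
lemma projC_vec (a b c d : ℝ) :
    projC ({α3, α4} : Set (EuclideanSpace ℝ (Fin 4))) (vec a b c d) =
      vec ((2*a+b+c)/3) ((a+2*b-c)/3) ((a-b+2*c)/3) 0 := by
  apply Submodule.eq_starProjection_of_mem_orthogonal
  · apply mem_orth
    · rw [hα3, inner_vec]; ring
    · rw [hα4, inner_vec]; ring
  · rw [Submodule.orthogonal_orthogonal]
    have hdiff : vec a b c d - vec ((2*a+b+c)/3) ((a+2*b-c)/3) ((a-b+2*c)/3) 0 =
        (2 * ((a-b-c)/3)) • α4 + (d + (a-b-c)/3) • α3 := by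
      rw [hα3, hα4]; simp only [vec]; module
    rw [hdiff]
    exact Submodule.add_mem _
      (Submodule.smul_mem _ _ (Submodule.subset_span (by simp)))
      (Submodule.smul_mem _ _ (Submodule.subset_span (by simp)))

/-- The twelve restricted roots, explicitly. -/
def Tvec : Set (EuclideanSpace ℝ (Fin 4)) :=
  {vec 0 1 (-1) 0, vec 0 (-1) 1 0,
   vec (1/3) (-(1/3)) (2/3) 0, vec (-(1/3)) (1/3) (-(2/3)) 0,
   vec (1/3) (2/3) (-(1/3)) 0, vec (-(1/3)) (-(2/3)) (1/3) 0,
   vec (2/3) (1/3) (1/3) 0, vec (-(2/3)) (-(1/3)) (-(1/3)) 0,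
   vec 1 0 1 0, vec (-1) 0 (-1) 0,
   vec 1 1 0 0, vec (-1) (-1) 0 0}

lemma fin4_cases : ∀ k : Fin 4, k = 0 ∨ k = 1 ∨ k = 2 ∨ k = 3 := by decide

set_option maxHeartbeats 4000000 in
/-- Every `F4` root projects to `0` or to one of the twelve elements of `Tvec`. -/
lemma enum : ∀ v ∈ F4roots,
    projC ({α3, α4} : Set (EuclideanSpace ℝ (Fin 4))) v ∈ insert 0 Tvec := by
  intro v hv
  simp only [F4roots, Set.mem_union, Set.mem_setOf_eq] at hv
  rcases hv with ((⟨k, l, hkl, hv⟩ | ⟨k, hv⟩) | ⟨ε, hε, rfl⟩)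
  · rcases fin4_cases k with rfl | rfl | rfl | rfl <;>
      rcases fin4_cases l with rfl | rfl | rfl | rfl <;>
      (try exact absurd hkl (by decide)) <;>
      rcases hv with rfl | rfl | rfl | rfl <;>
      · simp only [he0, he1, he2, he3, vec_sub, vec_add, vec_neg, vec_smul, projC_vec,
          Tvec, Set.mem_insert_iff, Set.mem_singleton_iff, vec_inj, vec_eq_zero]
        norm_num
  · rcases fin4_cases k with rfl | rfl | rfl | rfl <;> rcases hv with rfl | rfl <;>
      · simp only [he0, he1, he2, he3, vec_sub, vec_add, vec_neg, vec_smul, projC_vec,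
          Tvec, Set.mem_insert_iff, Set.mem_singleton_iff, vec_inj, vec_eq_zero]
        norm_num
  · rw [Fin.sum_univ_four]
    rcases hε 0 with h0 | h0 <;> rcases hε 1 with h1 | h1 <;>
      rcases hε 2 with h2 | h2 <;> rcases hε 3 with h3 | h3 <;>
      · rw [h0, h1, h2, h3]
        simp only [he0, he1, he2, he3, vec_sub, vec_add, vec_neg, vec_smul, projC_vec,
          Tvec, Set.mem_insert_iff, Set.mem_singleton_iff, vec_inj, vec_eq_zero]
        norm_num

lemma proj_eq (a b c d a' b' c' d' : ℝ)
    (h1 : (2*a+b+c)/3 = a') (h2 : (a+2*b-c)/3 = b') (h3 : (a-b+2*c)/3 = c') (h4 : (0:ℝ) = d') :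
    projC ({α3, α4} : Set (EuclideanSpace ℝ (Fin 4))) (vec a b c d) = vec a' b' c' d' := by
  rw [projC_vec, vec_inj]; exact ⟨h1, h2, h3, h4⟩

set_option maxHeartbeats 1000000 in
/-- Each element of `Tvec` is a restricted root. -/
lemma Tvec_sub : Tvec ⊆ restrictedRoots F4roots ({α3, α4} : Set (EuclideanSpace ℝ (Fin 4))) := by
  have hnz : ∀ x ∈ Tvec, x ∉ ({0} : Set (EuclideanSpace ℝ (Fin 4))) := by
    intro x hx
    rcases hx with rfl | rfl | rfl | rfl | rfl | rfl | rfl | rfl | rfl | rfl | rfl | rfl <;>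
      simp [vec_eq_zero]
  intro x hx
  refine ⟨?_, hnz x hx⟩
  rcases hx with rfl | rfl | rfl | rfl | rfl | rfl | rfl | rfl | rfl | rfl | rfl | rfl
  · exact ⟨e 1 - e 2, Or.inl (Or.inl ⟨1, 2, by decide, Or.inl rfl⟩),
      by rw [he1, he2, vec_sub]; exact proj_eq _ _ _ _ _ _ _ _ (by norm_num) (by norm_num) (by norm_num) (by norm_num)⟩
  · exact ⟨-e 1 + e 2, Or.inl (Or.inl ⟨1, 2, by decide, Or.inr (Or.inr (Or.inl rfl))⟩),
      by rw [he1, he2, vec_neg, vec_add]; exact proj_eq _ _ _ _ _ _ _ _ (by norm_num) (by norm_num) (by norm_num) (by norm_num)⟩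
  · exact ⟨e 2, Or.inl (Or.inr ⟨2, Or.inl rfl⟩),
      by rw [he2]; exact proj_eq _ _ _ _ _ _ _ _ (by norm_num) (by norm_num) (by norm_num) (by norm_num)⟩
  · exact ⟨-e 2, Or.inl (Or.inr ⟨2, Or.inr rfl⟩),
      by rw [he2, vec_neg]; exact proj_eq _ _ _ _ _ _ _ _ (by norm_num) (by norm_num) (by norm_num) (by norm_num)⟩
  · exact ⟨e 1, Or.inl (Or.inr ⟨1, Or.inl rfl⟩),
      by rw [he1]; exact proj_eq _ _ _ _ _ _ _ _ (by norm_num) (by norm_num) (by norm_num) (by norm_num)⟩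
  · exact ⟨-e 1, Or.inl (Or.inr ⟨1, Or.inr rfl⟩),
      by rw [he1, vec_neg]; exact proj_eq _ _ _ _ _ _ _ _ (by norm_num) (by norm_num) (by norm_num) (by norm_num)⟩
  · exact ⟨e 0, Or.inl (Or.inr ⟨0, Or.inl rfl⟩),
      by rw [he0]; exact proj_eq _ _ _ _ _ _ _ _ (by norm_num) (by norm_num) (by norm_num) (by norm_num)⟩
  · exact ⟨-e 0, Or.inl (Or.inr ⟨0, Or.inr rfl⟩),
      by rw [he0, vec_neg]; exact proj_eq _ _ _ _ _ _ _ _ (by norm_num) (by norm_num) (by norm_num) (by norm_num)⟩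
  · exact ⟨e 0 + e 2, Or.inl (Or.inl ⟨0, 2, by decide, Or.inr (Or.inl rfl)⟩),
      by rw [he0, he2, vec_add]; exact proj_eq _ _ _ _ _ _ _ _ (by norm_num) (by norm_num) (by norm_num) (by norm_num)⟩
  · exact ⟨-e 0 - e 2, Or.inl (Or.inl ⟨0, 2, by decide, Or.inr (Or.inr (Or.inr rfl))⟩),
      by rw [he0, he2, vec_neg, vec_sub]; exact proj_eq _ _ _ _ _ _ _ _ (by norm_num) (by norm_num) (by norm_num) (by norm_num)⟩
  · exact ⟨e 0 + e 1, Or.inl (Or.inl ⟨0, 1, by decide, Or.inr (Or.inl rfl)⟩),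
      by rw [he0, he1, vec_add]; exact proj_eq _ _ _ _ _ _ _ _ (by norm_num) (by norm_num) (by norm_num) (by norm_num)⟩
  · exact ⟨-e 0 - e 1, Or.inl (Or.inl ⟨0, 1, by decide, Or.inr (Or.inr (Or.inr rfl))⟩),
      by rw [he0, he1, vec_neg, vec_sub]; exact proj_eq _ _ _ _ _ _ _ _ (by norm_num) (by norm_num) (by norm_num) (by norm_num)⟩

set_option maxHeartbeats 1000000 in
lemma main :
    reducedRestrictedRoots F4roots ({α3, α4} : Set (EuclideanSpace ℝ (Fin 4))) = Tvec := by
  have hsub : restrictedRoots F4roots ({α3, α4} : Set (EuclideanSpace ℝ (Fin 4))) ⊆ Tvec := by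
    rintro x ⟨⟨v, hv, rfl⟩, h0⟩
    rcases Set.mem_insert_iff.1 (enum v hv) with h | h
    · exact absurd h h0
    · exact h
  ext x
  simp only [reducedRestrictedRoots, Set.mem_setOf_eq]
  constructor
  · rintro ⟨hx, -⟩
    exact hsub hx
  · intro hx
    refine ⟨Tvec_sub hx, fun hc => ?_⟩
    have hhalf : (1/2 : ℝ) • x ∈ Tvec := hsub hc
    rcases hx with rfl | rfl | rfl | rfl | rfl | rfl | rfl | rfl | rfl | rfl | rfl | rfl <;>
      · simp only [vec_smul, Tvec, Set.mem_insert_iff, Set.mem_singleton_iff, vec_inj] at hhalf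
        norm_num at hhalf

set_option maxHeartbeats 1000000 in
/-- In type `F_4`, with `S = {α_3, α_4}`, the projections `ᾱ_1, ᾱ_2`
onto the orthogonal complement of the span of `S` are linearly independent and the set
of reduced restricted roots is
`{±ᾱ_1, ±ᾱ_2, ±(ᾱ_1 + ᾱ_2), ±(ᾱ_1 + 2ᾱ_2), ±(ᾱ_1 + 3ᾱ_2), ±(2ᾱ_1 + 3ᾱ_2)}`
(a root system of type `G_2`). -/
theorem statement12 (S : Set (EuclideanSpace ℝ (Fin 4)))
    (hS : S = {α3, α4}) :
    LinearIndependent ℝ ![projC S α1, projC S α2] ∧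
    reducedRestrictedRoots F4roots S =
      {projC S α1, -projC S α1, projC S α2, -projC S α2,
       projC S α1 + projC S α2, -(projC S α1 + projC S α2),
       projC S α1 + (2 : ℝ) • projC S α2, -(projC S α1 + (2 : ℝ) • projC S α2),
       projC S α1 + (3 : ℝ) • projC S α2, -(projC S α1 + (3 : ℝ) • projC S α2),
       (2 : ℝ) • projC S α1 + (3 : ℝ) • projC S α2,
       -((2 : ℝ) • projC S α1 + (3 : ℝ) • projC S α2)} := by
  subst hS
  have pα1 : projC ({α3, α4} : Set (EuclideanSpace ℝ (Fin 4))) α1 = vec 0 1 (-1) 0 := by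
    have : α1 = vec 0 1 (-1) 0 := by simp only [α1, vec]; module
    rw [this]
    exact proj_eq _ _ _ _ _ _ _ _ (by norm_num) (by norm_num) (by norm_num) (by norm_num)
  have pα2 : projC ({α3, α4} : Set (EuclideanSpace ℝ (Fin 4))) α2 =
      vec (1/3) (-(1/3)) (2/3) 0 := by
    have : α2 = vec 0 0 1 (-1) := by simp only [α2, vec]; module
    rw [this]
    exact proj_eq _ _ _ _ _ _ _ _ (by norm_num) (by norm_num) (by norm_num) (by norm_num)
  constructor
  · rw [show (![projC ({α3, α4} : Set (EuclideanSpace ℝ (Fin 4))) α1,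
        projC ({α3, α4} : Set (EuclideanSpace ℝ (Fin 4))) α2] : Fin 2 → _) =
        ![vec 0 1 (-1) 0, vec (1/3) (-(1/3)) (2/3) 0] by rw [pα1, pα2]]
    rw [linearIndependent_fin2]
    constructor
    · show vec (1/3) (-(1/3)) (2/3) 0 ≠ 0
      rw [Ne, vec_eq_zero]; norm_num
    · intro a h
      rw [show (![vec 0 1 (-1) 0, vec (1/3) (-(1/3)) (2/3) 0] : Fin 2 → _) 1 =
          vec (1/3) (-(1/3)) (2/3) 0 from rfl,
        show (![vec 0 1 (-1) 0, vec (1/3) (-(1/3)) (2/3) 0] : Fin 2 → _) 0 =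
          vec 0 1 (-1) 0 from rfl, vec_smul, vec_inj] at h
      obtain ⟨h1, h2, -⟩ := h
      norm_num at h1 h2
      rw [h1] at h2
      norm_num at h2
  · rw [main, pα1, pα2]
    simp only [vec_add, vec_smul, vec_neg, Tvec]
    norm_num

end
end
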